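/- Let d ≥ 1, let A be a symmetric d×d real matrix with operator norm ‖A‖ ≤ 1 and maximum column norm ‖A‖_{1→2} ≤ 1, and let η > 0, ε ∈ ℝ. Then for every integer T ≥ 1, ‖E[B_T]‖_{1→2} ≤ η ‖E[B_{T−1}]‖ + (1 + η) ‖E[B_{T−1}]‖_{1→2} + η² d² ‖diag(E[B_{T−1}])‖. -/

import Mathlib

open Matrix BigOperators

/-- The rank-one sample matrix `A_{(i,j)} = d² A_{ij} e_i e_jᵀ`. -/
noncomputable def sampleMat {d : ℕ} (A : Matrix (Fin d) (Fin d) ℝ) (p : Fin d × Fin d) :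
    Matrix (Fin d) (Fin d) ℝ :=
  ((d : ℝ) ^ 2 * A p.1 p.2) • Matrix.single p.1 p.2 1

/-- `P_T(ω) = (I + η A_{(i_T,j_T)}) ⋯ (I + η A_{(i_1,j_1)})`. -/
noncomputable def prodMat {d : ℕ} (A : Matrix (Fin d) (Fin d) ℝ) (η : ℝ) :
    (T : ℕ) → (Fin T → Fin d × Fin d) → Matrix (Fin d) (Fin d) ℝ
  | 0, _ => 1
  | (T + 1), ω => (1 + η • sampleMat A (ω (Fin.last T))) * prodMat A η T (fun t => ω t.castSucc)

/-- `E[B_T]`: the average of `P_T(ω)ᵀ ((1-ε)I - A) P_T(ω)` over all sequences `ω`. -/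
noncomputable def EB {d : ℕ} (A : Matrix (Fin d) (Fin d) ℝ) (η ε : ℝ) (T : ℕ) :
    Matrix (Fin d) (Fin d) ℝ :=
  (Fintype.card (Fin T → Fin d × Fin d) : ℝ)⁻¹ •
    ∑ ω : Fin T → Fin d × Fin d,
      (prodMat A η T ω)ᵀ * ((1 - ε) • (1 : Matrix (Fin d) (Fin d) ℝ) - A) * prodMat A η T ω

/-- The operator (spectral) norm of a matrix, as a map on Euclidean space. -/
noncomputable def opNorm {d : ℕ} (M : Matrix (Fin d) (Fin d) ℝ) : ℝ :=
  ‖Matrix.toEuclideanCLM (𝕜 := ℝ) M‖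

/-- The maximum Euclidean column norm `‖M‖_{1→2} = max_j ‖M e_j‖₂`. -/
noncomputable def colNorm {d : ℕ} (M : Matrix (Fin d) (Fin d) ℝ) : ℝ :=
  ⨆ j : Fin d, Real.sqrt (∑ i : Fin d, (M i j) ^ 2)

/-- `diag(M)`: the diagonal matrix with the same diagonal as `M`. -/
def diagPart {d : ℕ} (M : Matrix (Fin d) (Fin d) ℝ) : Matrix (Fin d) (Fin d) ℝ :=
  Matrix.diagonal M.diag

lemma prodMat_cons {d : ℕ} (A : Matrix (Fin d) (Fin d) ℝ) (η : ℝ) :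
    ∀ (T : ℕ) (ω : Fin T → Fin d × Fin d) (p : Fin d × Fin d),
      prodMat A η (T + 1) (Fin.cons p ω) = prodMat A η T ω * (1 + η • sampleMat A p)
  | 0, ω, p => by
      simp [prodMat]
  | (T + 1), ω, p => by
      have h1 : (Fin.cons p ω : Fin (T+2) → Fin d × Fin d) (Fin.last (T+1)) = ω (Fin.last T) := by
        rw [← Fin.succ_last, Fin.cons_succ]
      have h2 : (fun t : Fin (T+1) => (Fin.cons p ω : Fin (T+2) → _) t.castSucc)
          = Fin.cons p (fun t : Fin T => ω t.castSucc) := by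
        funext t
        refine Fin.cases ?_ (fun i => ?_) t
        · simp
        · rw [← Fin.succ_castSucc, Fin.cons_succ, Fin.cons_succ]
      rw [prodMat, h1, h2, prodMat_cons A η T _ p, prodMat, mul_assoc]

lemma EB_succ {d : ℕ} (A : Matrix (Fin d) (Fin d) ℝ) (η ε : ℝ) (T : ℕ) :
    EB A η ε (T + 1) = ((d : ℝ) ^ 2)⁻¹ •
      ∑ p : Fin d × Fin d,
        (1 + η • sampleMat A p)ᵀ * EB A η ε T * (1 + η • sampleMat A p) := by
  classical
  have hsum : ∑ ω : Fin (T+1) → Fin d × Fin d,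
      (prodMat A η (T+1) ω)ᵀ * ((1 - ε) • (1 : Matrix (Fin d) (Fin d) ℝ) - A) * prodMat A η (T+1) ω
      = ∑ p : Fin d × Fin d, ∑ ω : Fin T → Fin d × Fin d,
        (1 + η • sampleMat A p)ᵀ *
          ((prodMat A η T ω)ᵀ * ((1 - ε) • (1 : Matrix (Fin d) (Fin d) ℝ) - A) * prodMat A η T ω)
          * (1 + η • sampleMat A p) := by
    rw [← (Fin.consEquiv (fun _ : Fin (T+1) => Fin d × Fin d)).sum_comp, Fintype.sum_prod_type]
    refine Finset.sum_congr rfl fun p _ => Finset.sum_congr rfl fun ω _ => ?_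
    show (prodMat A η (T+1) (Fin.cons p ω))ᵀ * _ * prodMat A η (T+1) (Fin.cons p ω) = _
    rw [prodMat_cons, transpose_mul]
    noncomm_ring
  have hcard : (Fintype.card (Fin (T+1) → Fin d × Fin d) : ℝ)
      = (d : ℝ)^2 * (Fintype.card (Fin T → Fin d × Fin d) : ℝ) := by
    simp [Fintype.card_fun, pow_succ, Fintype.card_prod]
    ring
  rw [EB, hsum, hcard, mul_inv, mul_smul, Finset.smul_sum]
  congr 1
  refine Finset.sum_congr rfl fun p _ => ?_
  rw [EB, _root_.Matrix.mul_smul, Matrix.smul_mul, Finset.mul_sum, Finset.sum_mul]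

lemma sum_sampleMat {d : ℕ} (A : Matrix (Fin d) (Fin d) ℝ) :
    ∑ p : Fin d × Fin d, sampleMat A p = (d : ℝ)^2 • A := by
  rw [Fintype.sum_prod_type]
  conv_rhs => rw [matrix_eq_sum_single ((d:ℝ)^2 • A)]
  refine Finset.sum_congr rfl fun i _ => Finset.sum_congr rfl fun j _ => ?_
  simp [sampleMat, Matrix.smul_single]

lemma sandwich {d : ℕ} (B : Matrix (Fin d) (Fin d) ℝ) (i j : Fin d) :
    (Matrix.single i j (1:ℝ))ᵀ * B * Matrix.single i j 1
      = Matrix.single j j (B i i) := by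
  ext a b
  simp only [Matrix.single, Matrix.mul_apply, Matrix.transpose_apply, Matrix.of_apply,
    ite_and, Finset.sum_ite_eq, Finset.mem_univ, if_true, boole_mul, mul_boole, mul_ite,
    ite_mul, zero_mul, mul_zero, one_mul, mul_one, Finset.sum_ite_eq', Finset.sum_const_zero]
  by_cases h1 : j = a <;> by_cases h2 : j = b <;> simp [h1, h2]

lemma EB_succ_expand {d : ℕ} (hd : 1 ≤ d) (A : Matrix (Fin d) (Fin d) ℝ) (η ε : ℝ) (T : ℕ) :
    EB A η ε (T + 1) = EB A η ε T + η • (Aᵀ * EB A η ε T) + η • (EB A η ε T * A)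
      + η^2 • Matrix.diagonal (fun j => (d:ℝ)^2 * ∑ i, (A i j)^2 * EB A η ε T i i) := by
  classical
  have hd0 : (d : ℝ) ≠ 0 := Nat.cast_ne_zero.2 (by omega)
  set B := EB A η ε T with hB
  have hexp : ∀ p : Fin d × Fin d, (1 + η • sampleMat A p)ᵀ * B * (1 + η • sampleMat A p)
      = B + η • ((sampleMat A p)ᵀ * B) + η • (B * sampleMat A p)
        + (η^2) • ((sampleMat A p)ᵀ * B * sampleMat A p) := by
    intro p
    simp only [Matrix.transpose_add, Matrix.transpose_one, Matrix.transpose_smul,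
      Matrix.add_mul, Matrix.mul_add, Matrix.smul_mul, _root_.Matrix.mul_smul,
      Matrix.one_mul, Matrix.mul_one, smul_smul, smul_add, pow_two]
    abel
  have hsand : ∀ p : Fin d × Fin d, (sampleMat A p)ᵀ * B * sampleMat A p
      = ((d:ℝ)^2 * A p.1 p.2)^2 • Matrix.single p.2 p.2 (B p.1 p.1) := by
    intro p
    rw [sampleMat, Matrix.transpose_smul, Matrix.smul_mul, Matrix.smul_mul,
      _root_.Matrix.mul_smul, smul_smul, sandwich]
    congr 1
    ring
  have hdiag : ∑ p : Fin d × Fin d, ((d:ℝ)^2 * A p.1 p.2)^2 • Matrix.single p.2 p.2 (B p.1 p.1)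
      = (d:ℝ)^2 • Matrix.diagonal (fun j => (d:ℝ)^2 * ∑ i, (A i j)^2 * B i i) := by
    rw [Fintype.sum_prod_type]
    ext a b
    by_cases hab : a = b
    · subst hab
      simp only [Matrix.sum_apply, Matrix.smul_apply, Matrix.single, Matrix.of_apply,
        ite_and, smul_eq_mul, mul_ite, mul_zero, Matrix.diagonal_apply_eq,
        Finset.sum_ite_eq', Finset.mem_univ, if_true]
      rw [Finset.mul_sum, Finset.mul_sum]
      exact Finset.sum_congr rfl fun i _ => by ring
    · simp only [Matrix.sum_apply, Matrix.smul_apply, Matrix.single, Matrix.of_apply,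
        ite_and, smul_eq_mul, mul_ite, mul_zero, Matrix.diagonal_apply_ne _ hab]
      refine Finset.sum_eq_zero fun i _ => Finset.sum_eq_zero fun j _ => ?_
      by_cases h1 : j = a
      · subst h1; simp [hab]
      · simp [h1]
  rw [EB_succ]
  rw [Finset.sum_congr rfl (fun p _ => hexp p)]
  rw [Finset.sum_add_distrib, Finset.sum_add_distrib, Finset.sum_add_distrib,
    Finset.sum_const, ← Finset.smul_sum, ← Finset.smul_sum, ← Finset.smul_sum,
    ← Finset.sum_mul, ← Matrix.transpose_sum, sum_sampleMat, ← Finset.mul_sum, sum_sampleMat,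
    Finset.sum_congr rfl (fun p _ => hsand p), hdiag, Matrix.transpose_smul, Matrix.smul_mul, _root_.Matrix.mul_smul,
    Finset.card_univ, Fintype.card_prod, Fintype.card_fin]
  rw [← Nat.cast_smul_eq_nsmul ℝ]
  push_cast
  match_scalars <;> field_simp <;> ring

noncomputable def colE {d : ℕ} (M : Matrix (Fin d) (Fin d) ℝ) (j : Fin d) :
    EuclideanSpace ℝ (Fin d) :=
  (WithLp.equiv 2 (Fin d → ℝ)).symm (fun i => M i j)

lemma colNorm_eq {d : ℕ} (M : Matrix (Fin d) (Fin d) ℝ) :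
    colNorm M = ⨆ j : Fin d, ‖colE M j‖ := by
  unfold colNorm colE
  congr 1
  funext j
  rw [EuclideanSpace.norm_eq]
  congr 1
  exact Finset.sum_congr rfl fun i _ => by
    rw [WithLp.equiv_symm_apply, PiLp.toLp_apply, Real.norm_eq_abs, sq_abs]

lemma le_colNorm {d : ℕ} (M : Matrix (Fin d) (Fin d) ℝ) (j : Fin d) :
    ‖colE M j‖ ≤ colNorm M := by
  rw [colNorm_eq]
  exact le_ciSup (f := fun j => ‖colE M j‖) (Set.Finite.bddAbove (Set.finite_range _)) j

lemma colNorm_le {d : ℕ} [Nonempty (Fin d)] (M : Matrix (Fin d) (Fin d) ℝ) {c : ℝ}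
    (h : ∀ j, ‖colE M j‖ ≤ c) : colNorm M ≤ c := by
  rw [colNorm_eq]; exact ciSup_le h

lemma colNorm_nonneg {d : ℕ} (M : Matrix (Fin d) (Fin d) ℝ) : 0 ≤ colNorm M :=
  Real.iSup_nonneg fun j => Real.sqrt_nonneg _

lemma colE_mul {d : ℕ} (M N : Matrix (Fin d) (Fin d) ℝ) (j : Fin d) :
    colE (M * N) j = Matrix.toEuclideanCLM (𝕜 := ℝ) M (colE N j) := by
  rw [colE, colE, WithLp.equiv_symm_apply, Matrix.toEuclideanCLM_toLp]
  congr 1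

lemma norm_colE_mul_le {d : ℕ} (M N : Matrix (Fin d) (Fin d) ℝ) (j : Fin d) :
    ‖colE (M * N) j‖ ≤ opNorm M * ‖colE N j‖ := by
  rw [colE_mul]
  exact ContinuousLinearMap.le_opNorm (Matrix.toEuclideanCLM (𝕜 := ℝ) M) (colE N j)

lemma diag_le_opNorm {d : ℕ} (v : Fin d → ℝ) (i : Fin d) :
    |v i| ≤ opNorm (Matrix.diagonal v) := by
  have key : Matrix.toEuclideanCLM (𝕜 := ℝ) (Matrix.diagonal v) (EuclideanSpace.single i 1)
      = EuclideanSpace.single i (v i) := by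
    rw [show (EuclideanSpace.single i (1:ℝ)) = (WithLp.equiv 2 (Fin d → ℝ)).symm (Pi.single i 1)
        from rfl, WithLp.equiv_symm_apply, Matrix.toEuclideanCLM_toLp]
    rw [show (EuclideanSpace.single i (v i)) = (WithLp.equiv 2 (Fin d → ℝ)).symm (Pi.single i (v i))
        from rfl, WithLp.equiv_symm_apply]
    congr 1
    funext k
    rw [Matrix.mulVec_diagonal]
    by_cases hk : k = i
    · subst hk; simp
    · simp [Pi.single_eq_of_ne hk]
  have h1 : ‖EuclideanSpace.single i (v i)‖ ≤ opNorm (Matrix.diagonal v) * ‖EuclideanSpace.single i (1:ℝ)‖ := by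
    rw [← key]; exact ContinuousLinearMap.le_opNorm (Matrix.toEuclideanCLM (𝕜 := ℝ) (Matrix.diagonal v)) _
  simpa [EuclideanSpace.norm_single] using h1

lemma norm_colE_diagonal {d : ℕ} (v : Fin d → ℝ) (j : Fin d) :
    ‖colE (Matrix.diagonal v) j‖ = |v j| := by
  have : colE (Matrix.diagonal v) j = EuclideanSpace.single j (v j) := by
    rw [colE, show (EuclideanSpace.single j (v j)) = (WithLp.equiv 2 (Fin d → ℝ)).symm (Pi.single j (v j)) from rfl]
    congr 1
    funext i
    by_cases hi : i = j
    · subst hi; simp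
    · rw [Matrix.diagonal_apply_ne _ hi, Pi.single_eq_of_ne hi]
  rw [this, EuclideanSpace.norm_single, Real.norm_eq_abs]

lemma colE_add {d : ℕ} (M N : Matrix (Fin d) (Fin d) ℝ) (j : Fin d) :
    colE (M + N) j = colE M j + colE N j := rfl

lemma colE_smul {d : ℕ} (c : ℝ) (M : Matrix (Fin d) (Fin d) ℝ) (j : Fin d) :
    colE (c • M) j = c • colE M j := rfl

lemma sq_col_le {d : ℕ} {A : Matrix (Fin d) (Fin d) ℝ} (h : colNorm A ≤ 1) (j : Fin d) :
    ∑ i, (A i j)^2 ≤ 1 := by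
  have h0 : (0:ℝ) ≤ ∑ i, (A i j)^2 := Finset.sum_nonneg fun i _ => sq_nonneg _
  have hs : Real.sqrt (∑ i, (A i j)^2) ≤ colNorm A :=
    le_ciSup (f := fun j => Real.sqrt (∑ i : Fin d, (A i j) ^ 2))
      (Set.Finite.bddAbove (Set.finite_range _)) j
  nlinarith [Real.sq_sqrt h0, Real.sqrt_nonneg (∑ i, (A i j)^2)]

theorem stmt5 {d : ℕ} (hd : 1 ≤ d) (A : Matrix (Fin d) (Fin d) ℝ) (hsymm : A.IsSymm)
    (hAop : opNorm A ≤ 1) (hAcol : colNorm A ≤ 1) (η ε : ℝ) (hη : 0 < η)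
    (T : ℕ) (hT : 1 ≤ T) :
    colNorm (EB A η ε T)
      ≤ η * opNorm (EB A η ε (T - 1)) + (1 + η) * colNorm (EB A η ε (T - 1))
        + η ^ 2 * (d : ℝ) ^ 2 * opNorm (diagPart (EB A η ε (T - 1))) := by
  classical
  obtain ⟨n, rfl⟩ : ∃ n, T = n + 1 := ⟨T - 1, (Nat.succ_pred_eq_of_pos hT).symm⟩
  have : Nonempty (Fin d) := ⟨⟨0, hd⟩⟩
  simp only [Nat.add_sub_cancel]
  set B := EB A η ε n with hB
  set v : Fin d → ℝ := fun j => (d:ℝ)^2 * ∑ i, (A i j)^2 * B i i with hv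
  have hexp : EB A η ε (n+1) = B + η • (A * B) + η • (B * A) + η^2 • Matrix.diagonal v := by
    rw [EB_succ_expand hd A η ε n, hsymm]
  have hopB : (0:ℝ) ≤ opNorm B := norm_nonneg _
  have hopD : (0:ℝ) ≤ opNorm (diagPart B) := norm_nonneg _
  refine colNorm_le _ fun j => ?_
  rw [hexp, colE_add, colE_add, colE_add, colE_smul, colE_smul, colE_smul]
  have h1 : ‖colE B j‖ ≤ colNorm B := le_colNorm B j
  have h2 : ‖colE (A * B) j‖ ≤ colNorm B := by
    calc ‖colE (A * B) j‖ ≤ opNorm A * ‖colE B j‖ := norm_colE_mul_le A B j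
    _ ≤ 1 * colNorm B := by
        apply mul_le_mul hAop h1 (norm_nonneg _) zero_le_one
    _ = colNorm B := one_mul _
  have h3 : ‖colE (B * A) j‖ ≤ opNorm B := by
    calc ‖colE (B * A) j‖ ≤ opNorm B * ‖colE A j‖ := norm_colE_mul_le B A j
    _ ≤ opNorm B * 1 := by
        apply mul_le_mul_of_nonneg_left ((le_colNorm A j).trans hAcol) hopB
    _ = opNorm B := mul_one _
  have h4 : ‖colE (Matrix.diagonal v) j‖ ≤ (d:ℝ)^2 * opNorm (diagPart B) := by
    rw [norm_colE_diagonal]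
    have hdd : ∀ i : Fin d, |B i i| ≤ opNorm (diagPart B) := fun i => diag_le_opNorm B.diag i
    have habs : |∑ i, (A i j)^2 * B i i| ≤ ∑ i, (A i j)^2 * opNorm (diagPart B) := by
      refine (Finset.abs_sum_le_sum_abs _ _).trans (Finset.sum_le_sum fun i _ => ?_)
      rw [abs_mul, abs_of_nonneg (sq_nonneg (A i j))]
      exact mul_le_mul_of_nonneg_left (hdd i) (sq_nonneg _)
    have hsum : ∑ i, (A i j)^2 * opNorm (diagPart B) ≤ opNorm (diagPart B) := by
      rw [← Finset.sum_mul]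
      nlinarith [sq_col_le hAcol j]
    rw [hv, abs_mul, abs_of_nonneg (by positivity : (0:ℝ) ≤ (d:ℝ)^2)]
    exact mul_le_mul_of_nonneg_left (habs.trans hsum) (by positivity)
  calc ‖colE B j + η • colE (A*B) j + η • colE (B*A) j + η^2 • colE (Matrix.diagonal v) j‖
      ≤ ‖colE B j + η • colE (A*B) j + η • colE (B*A) j‖ + ‖η^2 • colE (Matrix.diagonal v) j‖ :=
        norm_add_le _ _
    _ ≤ (‖colE B j + η • colE (A*B) j‖ + ‖η • colE (B*A) j‖) + ‖η^2 • colE (Matrix.diagonal v) j‖ := by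
        gcongr; exact norm_add_le _ _
    _ ≤ ((‖colE B j‖ + ‖η • colE (A*B) j‖) + ‖η • colE (B*A) j‖) + ‖η^2 • colE (Matrix.diagonal v) j‖ := by
        gcongr; exact norm_add_le _ _
    _ = ‖colE B j‖ + η * ‖colE (A*B) j‖ + η * ‖colE (B*A) j‖ + η^2 * ‖colE (Matrix.diagonal v) j‖ := by
        rw [norm_smul, norm_smul, norm_smul, Real.norm_eq_abs, Real.norm_eq_abs,
          abs_of_pos hη, abs_of_nonneg (sq_nonneg η)]
    _ ≤ colNorm B + η * colNorm B + η * opNorm B + η^2 * ((d:ℝ)^2 * opNorm (diagPart B)) := by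
        gcongr <;> first | exact h1 | exact h2 | exact h3 | exact h4 | positivity | exact hη.le
    _ = η * opNorm B + (1 + η) * colNorm B + η ^ 2 * (d:ℝ)^2 * opNorm (diagPart B) := by ring
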